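/- Let G = (V, E) be a locally finite graph equipped with a random walk m = {m_v}, where each m_v is a probability measure supported on the closed neighborhood of v. Define the averaging operator M by (Mf)(x) = Σ_y f(y)·m_x(y). If the Ricci curvature satisfies κ(x,y) ≥ κ for all pairs x, y (where κ(x,y) = 1 - W(m_x, m_y)/d(x,y) and W is the L¹-Wasserstein distance with respect to the graph metric d), then for every k-Lipschitz function f: V → ℝ, the function Mf is k(1-κ)-Lipschitz. -/

import Mathlib

open Finset

/-- A probability vector on a finite set. -/
def IsProbVec {V : Type*} [Fintype V] (m : V → ℝ) : Prop :=
  (∀ x, 0 ≤ m x) ∧ ∑ x, m x = 1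

/-- A coupling between two probability vectors. -/
def IsCoupling {V : Type*} [Fintype V] (m₁ m₂ : V → ℝ) (A : V → V → ℝ) : Prop :=
  (∀ x y, 0 ≤ A x y) ∧ (∀ x, ∑ y, A x y = m₁ x) ∧ (∀ y, ∑ x, A x y = m₂ y)

/-- The L¹-Wasserstein (transportation) distance between two probability vectors,
with respect to the graph metric. -/
noncomputable def Wdist {V : Type*} [Fintype V] (G : SimpleGraph V) (m₁ m₂ : V → ℝ) : ℝ :=
  sInf {s | ∃ A : V → V → ℝ, IsCoupling m₁ m₂ A ∧
    s = ∑ x, ∑ y, A x y * (G.dist x y : ℝ)}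

/-- A random walk on a graph: at each vertex a probability measure supported on
the closed neighborhood. -/
def IsRandomWalk {V : Type*} [Fintype V] (G : SimpleGraph V) (m : V → V → ℝ) : Prop :=
  ∀ x, IsProbVec (m x) ∧ ∀ y, m x y ≠ 0 → y = x ∨ G.Adj x y

/-- Ollivier's Ricci curvature `κ(x,y) = 1 - W(m_x, m_y)/d(x,y)`. -/
noncomputable def ricci {V : Type*} [Fintype V] (G : SimpleGraph V) (m : V → V → ℝ)
    (x y : V) : ℝ :=
  1 - Wdist G (m x) (m y) / (G.dist x y : ℝ)

/-- The averaging operator `(Mf)(x) = ∑_y f(y)·m_x(y)`. -/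
def Mop {V : Type*} [Fintype V] (m : V → V → ℝ) (f : V → ℝ) : V → ℝ :=
  fun x => ∑ y, f y * m x y

section Aux
variable {V : Type*} [Fintype V] (G : SimpleGraph V)

/-- The product coupling. -/
lemma prod_coupling (m₁ m₂ : V → ℝ) (h₁ : IsProbVec m₁) (h₂ : IsProbVec m₂) :
    IsCoupling m₁ m₂ (fun u v => m₁ u * m₂ v) := by
  refine ⟨fun u v => mul_nonneg (h₁.1 u) (h₂.1 v), fun u => ?_, fun v => ?_⟩
  · rw [← Finset.mul_sum, h₂.2, mul_one]
  · rw [← Finset.sum_mul, h₁.2, one_mul]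

lemma coupling_bound (f : V → ℝ) (k : ℝ)
    (hf : ∀ x y : V, |f x - f y| ≤ k * (G.dist x y : ℝ))
    (m₁ m₂ : V → ℝ) (A : V → V → ℝ) (hA : IsCoupling m₁ m₂ A) :
    (∑ u, f u * m₁ u) - (∑ v, f v * m₂ v) ≤ k * ∑ u, ∑ v, A u v * (G.dist u v : ℝ) := by
  have h1 : (∑ u, f u * m₁ u) = ∑ u, ∑ v, f u * A u v := by
    refine Finset.sum_congr rfl fun u _ => ?_
    rw [← Finset.mul_sum, hA.2.1 u]
  have h2 : (∑ v, f v * m₂ v) = ∑ u, ∑ v, f v * A u v := by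
    rw [Finset.sum_comm]
    refine Finset.sum_congr rfl fun v _ => ?_
    rw [← Finset.mul_sum, hA.2.2 v]
  rw [h1, h2, ← Finset.sum_sub_distrib, Finset.mul_sum]
  refine Finset.sum_le_sum fun u _ => ?_
  rw [← Finset.sum_sub_distrib, Finset.mul_sum]
  refine Finset.sum_le_sum fun v _ => ?_
  have : f u * A u v - f v * A u v = (f u - f v) * A u v := by ring
  rw [this]
  calc (f u - f v) * A u v ≤ |f u - f v| * A u v :=
        mul_le_mul_of_nonneg_right (le_abs_self _) (hA.1 u v)
    _ ≤ (k * (G.dist u v : ℝ)) * A u v :=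
        mul_le_mul_of_nonneg_right (hf u v) (hA.1 u v)
    _ = k * (A u v * (G.dist u v : ℝ)) := by ring

end Aux

/-- Lipschitz contraction. If the Ricci curvature of `G` is at least `κ`,
then for every `k`-Lipschitz function `f`, the function `Mf` is `k(1-κ)`-Lipschitz. -/
theorem lipschitz_contraction {V : Type*} [Fintype V] (G : SimpleGraph V)
    (m : V → V → ℝ) (hm : IsRandomWalk G m) (κ : ℝ)
    (hκ : ∀ x y : V, x ≠ y → κ ≤ ricci G m x y)
    (k : ℝ) (f : V → ℝ) (hf : ∀ x y : V, |f x - f y| ≤ k * (G.dist x y : ℝ)) :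
    ∀ x y : V, |Mop m f x - Mop m f y| ≤ k * (1 - κ) * (G.dist x y : ℝ) := by
  -- main step: one-sided bound
  suffices H : ∀ x y : V, Mop m f x - Mop m f y ≤ k * (1 - κ) * (G.dist x y : ℝ) by
    intro x y
    rw [abs_sub_le_iff]
    refine ⟨H x y, ?_⟩
    have := H y x
    rwa [G.dist_comm] at this
  intro x y
  by_cases hxy : x = y
  · subst hxy; simp [SimpleGraph.dist_self]
  by_cases hd : G.dist x y = 0
  · -- not reachable; product coupling has zero cost
    have hnr : ¬G.Reachable x y := by
      rcases SimpleGraph.dist_eq_zero_iff_eq_or_not_reachable.mp hd with h | h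
      · exact absurd h hxy
      · exact h
    have hcost : (∑ u, ∑ v, (m x u * m y v) * (G.dist u v : ℝ)) = 0 := by
      refine Finset.sum_eq_zero fun u _ => Finset.sum_eq_zero fun v _ => ?_
      by_cases hu : m x u = 0
      · simp [hu]
      by_cases hv : m y v = 0
      · simp [hv]
      have hux : G.Reachable x u := by
        rcases (hm x).2 u hu with h | h
        · subst h; exact SimpleGraph.Reachable.refl _
        · exact h.reachable
      have hvy : G.Reachable y v := by
        rcases (hm y).2 v hv with h | h
        · subst h; exact SimpleGraph.Reachable.refl _
        · exact h.reachable
      have : ¬G.Reachable u v := fun h => hnr (hux.trans (h.trans hvy.symm))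
      rw [G.dist_eq_zero_of_not_reachable this]
      simp
    have hb := coupling_bound G f k hf (m x) (m y) _
      (prod_coupling (m x) (m y) (hm x).1 (hm y).1)
    rw [hcost, mul_zero] at hb
    rw [hd]
    simpa [Mop] using hb
  · -- dist positive
    have hdpos : (0 : ℝ) < (G.dist x y : ℝ) := by positivity
    have hk : 0 ≤ k := by
      have := (abs_nonneg (f x - f y)).trans (hf x y)
      nlinarith
    have hS : ∀ s ∈ {s | ∃ A : V → V → ℝ, IsCoupling (m x) (m y) A ∧
        s = ∑ u, ∑ v, A u v * (G.dist u v : ℝ)}, Mop m f x - Mop m f y ≤ k * s := by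
      rintro s ⟨A, hA, rfl⟩
      exact coupling_bound G f k hf (m x) (m y) A hA
    have hne : (Set.Nonempty {s | ∃ A : V → V → ℝ, IsCoupling (m x) (m y) A ∧
        s = ∑ u, ∑ v, A u v * (G.dist u v : ℝ)}) :=
      ⟨_, ⟨_, prod_coupling (m x) (m y) (hm x).1 (hm y).1, rfl⟩⟩
    have hMW : Mop m f x - Mop m f y ≤ k * Wdist G (m x) (m y) := by
      rcases eq_or_lt_of_le hk with hk0 | hkpos
      · rcases hne with ⟨s, hs⟩
        have := hS s hs
        rw [← hk0] at this ⊢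
        simpa using this
      · have : (Mop m f x - Mop m f y) / k ≤ Wdist G (m x) (m y) := by
          apply le_csInf hne
          intro s hs
          rw [div_le_iff₀ hkpos]
          have := hS s hs
          linarith [hS s hs, mul_comm k s]
        calc Mop m f x - Mop m f y = k * ((Mop m f x - Mop m f y) / k) := by
              field_simp
          _ ≤ k * Wdist G (m x) (m y) := mul_le_mul_of_nonneg_left this hk
    have hW : Wdist G (m x) (m y) ≤ (1 - κ) * (G.dist x y : ℝ) := by
      have := hκ x y hxy
      rw [ricci, le_sub_iff_add_le] at this
      have h2 : Wdist G (m x) (m y) / (G.dist x y : ℝ) ≤ 1 - κ := by linarith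
      calc Wdist G (m x) (m y) = (Wdist G (m x) (m y) / (G.dist x y : ℝ)) * (G.dist x y : ℝ) := by
            field_simp
        _ ≤ (1 - κ) * (G.dist x y : ℝ) := mul_le_mul_of_nonneg_right h2 hdpos.le
    calc Mop m f x - Mop m f y ≤ k * Wdist G (m x) (m y) := hMW
      _ ≤ k * ((1 - κ) * (G.dist x y : ℝ)) := mul_le_mul_of_nonneg_left hW hk
      _ = k * (1 - κ) * (G.dist x y : ℝ) := by ring
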